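/- If π is a probability vector on I ⊔ E that is stationary for a stochastic matrix P (i.e. πᵗP = πᵗ), and P satisfies hypothesis (H1): P(d,i) = π(i) for all d ∈ E and i ∈ I, then the restriction π_I of π to I satisfies π_Iᵗ P_{I×I} = π(I) π_Iᵗ, where π(I) = Σ_{i∈I} π(i); that is, π_I is a left eigenvector of the substochastic matrix P_{I×I} with eigenvalue π(I). -/
import Mathlib


open Finset

/-- If π is a stationary probability vector for a stochastic matrix P on I ⊔ E and
(H1) holds (P(d,i) = π(i) for d ∈ E, i ∈ I), then π_Iᵗ P_{I×I} = π(I) π_Iᵗ. -/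
theorem stmt0 {I E : Type*} [Fintype I] [Fintype E] [Nonempty I] [Nonempty E]
    (P : (I ⊕ E) → (I ⊕ E) → ℝ) (π : (I ⊕ E) → ℝ)
    (hPnn : ∀ a b, 0 ≤ P a b) (hProw : ∀ a, ∑ b, P a b = 1)
    (hπpos : ∀ a, 0 < π a) (hπsum : ∑ a, π a = 1)
    (hstat : ∀ b, ∑ a, π a * P a b = π b)
    (hH1 : ∀ (d : E) (i : I), P (Sum.inr d) (Sum.inl i) = π (Sum.inl i)) :
    ∀ j : I, ∑ i : I, π (Sum.inl i) * P (Sum.inl i) (Sum.inl j)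
      = (∑ i : I, π (Sum.inl i)) * π (Sum.inl j) := by
  intro j
  have hs := hstat (Sum.inl j)
  rw [Fintype.sum_sum_type] at hs
  have hE : ∑ d : E, π (Sum.inr d) * P (Sum.inr d) (Sum.inl j)
      = (∑ d : E, π (Sum.inr d)) * π (Sum.inl j) := by
    rw [sum_mul]
    exact Finset.sum_congr rfl fun d _ => by rw [hH1]
  have hsum : ∑ i : I, π (Sum.inl i) + ∑ d : E, π (Sum.inr d) = 1 := by
    rw [← Fintype.sum_sum_type]; exact hπsum
  rw [hE] at hs
  have hD : (∑ d : E, π (Sum.inr d)) = 1 - ∑ i : I, π (Sum.inl i) := by linarith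
  rw [hD] at hs
  linear_combination hs
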